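/- If G is a finite simple graph of order n, then γ_{rk}(G) · d_{rk}(G) ≤ k·n, where γ_{rk}(G) is the k-rainbow domination number and d_{rk}(G) is the k-rainbow domatic number of G. -/

import Mathlib

open SimpleGraph Finset

/-- A `k`-rainbow dominating function on a graph `H`. -/
def IsRDF {W : Type*} (H : SimpleGraph W) (k : ℕ) (f : W → Finset (Fin k)) : Prop :=
  ∀ w, f w = ∅ → ∀ c : Fin k, ∃ u, H.Adj w u ∧ c ∈ f u

/-- The weight of a rainbow dominating function. -/
noncomputable def rdfWeight {W : Type*} [Fintype W] {k : ℕ} (f : W → Finset (Fin k)) : ℕ :=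
  ∑ w, (f w).card

/-- The `k`-rainbow domination number of a graph. -/
noncomputable def rdn {W : Type*} [Fintype W] (H : SimpleGraph W) (k : ℕ) : ℕ :=
  sInf {n | ∃ f : W → Finset (Fin k), IsRDF H k f ∧ rdfWeight f = n}

/-- The middle graph of `G`, on vertex set `V(G) ⊕ E(G)`. -/
def middleGraph {V : Type*} (G : SimpleGraph V) : SimpleGraph (V ⊕ G.edgeSet) where
  Adj x y :=
    match x, y with
    | Sum.inl _, Sum.inl _ => False
    | Sum.inl v, Sum.inr e => v ∈ (e : Sym2 V)
    | Sum.inr e, Sum.inl v => v ∈ (e : Sym2 V)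
    | Sum.inr e, Sum.inr f => e ≠ f ∧ ∃ v, v ∈ (e : Sym2 V) ∧ v ∈ (f : Sym2 V)
  symm := by
    constructor
    rintro (v | e) (w | f) h
    · exact h.elim
    · exact h
    · exact h
    · exact ⟨Ne.symm h.1, h.2.imp fun v hv => ⟨hv.2, hv.1⟩⟩
  loopless := by
    constructor
    rintro (v | e) h
    · exact h.elim
    · exact h.1 rfl

/-- The middle `k`-rainbow domination number `γ*_{rk}(G)`. -/
noncomputable def mrdn {V : Type*} [Fintype V] (G : SimpleGraph V) (k : ℕ) : ℕ :=
  letI := Classical.decEq V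
  letI : DecidableRel G.Adj := fun _ _ => Classical.dec _
  rdn (middleGraph G) k

/-- The `k`-rainbow domatic number: the maximum size of a family of `k`-rainbow
dominating functions with `∑ i |f i v| ≤ k` for each vertex `v`. -/
noncomputable def rdomatic {W : Type*} (H : SimpleGraph W) (k : ℕ) : ℕ :=
  sSup {d | ∃ F : Fin d → W → Finset (Fin k), Function.Injective F ∧
    (∀ i, IsRDF H k (F i)) ∧ ∀ w, (∑ i, (F i w).card) ≤ k}

/-- The matching number `α'(G)`. -/
noncomputable def matchingNumber {V : Type*} [Fintype V] (G : SimpleGraph V) : ℕ :=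
  sSup {n | ∃ M : Finset (Sym2 V), ↑M ⊆ G.edgeSet ∧
    (∀ e ∈ M, ∀ f ∈ M, e ≠ f → ∀ v : V, ¬(v ∈ e ∧ v ∈ f)) ∧ M.card = n}

/-- `γ_{rk}(G) · d_{rk}(G) ≤ k·n`. -/
theorem stmt14 {V : Type*} [Fintype V] (G : SimpleGraph V) (k : ℕ) :
    rdn G k * rdomatic G k ≤ k * Fintype.card V := by
  classical
  set S : Set ℕ := {d | ∃ F : Fin d → V → Finset (Fin k), Function.Injective F ∧
    (∀ i, IsRDF G k (F i)) ∧ ∀ w, (∑ i, (F i w).card) ≤ k} with hS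
  have hne : S.Nonempty := ⟨0, Fin.elim0, fun i => i.elim0, fun i => i.elim0, fun w => by simp⟩
  have hbdd : BddAbove S := by
    refine ⟨Fintype.card (V → Finset (Fin k)), ?_⟩
    rintro d ⟨F, hinj, -⟩
    simpa using Fintype.card_le_of_injective F hinj
  have hmem : rdomatic G k ∈ S := Nat.sSup_mem hne hbdd
  obtain ⟨F, hinj, hrdf, hsum⟩ := hmem
  have h1 : ∀ i, rdn G k ≤ rdfWeight (F i) := fun i =>
    Nat.sInf_le ⟨F i, hrdf i, rfl⟩
  calc rdn G k * rdomatic G k = ∑ _i : Fin (rdomatic G k), rdn G k := by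
        simp [mul_comm]
    _ ≤ ∑ i, rdfWeight (F i) := Finset.sum_le_sum fun i _ => h1 i
    _ = ∑ w : V, ∑ i, (F i w).card := by
        rw [Finset.sum_comm]; rfl
    _ ≤ ∑ _w : V, k := Finset.sum_le_sum fun w _ => hsum w
    _ = k * Fintype.card V := by simp [mul_comm]
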